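/- Let X₁ and X₂ be Banach spaces with measures of non-compactness η₁ on X₁* and η₂ on X₂*, and endow X₁* × X₂* (the dual of X₁ × X₂) with the supremum norm. Then the product function η₁ × η₂ is a measure of non-compactness on X₁* × X₂*, and: (1) for weak*-compact A¹ ⊆ X₁*, A² ⊆ X₂* and ε > 0, [η₁ × η₂]'_ε(A¹ × A²) ⊆ ([η₁]'_ε(A¹) × A²) ∪ (A¹ × [η₂]'_ε(A²)); (2) if [η₁]^ω_ε(A¹) = ∅ and [η₂]^ω_ε(A²) = ∅, then [η₁ × η₂]^ω_ε(A¹ × A²) = ∅. -/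

import Mathlib

open Filter Topology Set Pointwise

noncomputable section

namespace Szlenk

variable {E : Type*}

/-- The fragment derivation `[η]'_ε(A)` associated to a set function `η`:
the points of `A` all of whose neighborhoods `U` satisfy `η (A ∩ cl U) ≥ ε`. -/
def frag [TopologicalSpace E] (η : Set E → ℝ) (ε : ℝ) (A : Set E) : Set E :=
  {x | x ∈ A ∧ ∀ U ∈ 𝓝 x, ε ≤ η (A ∩ closure U)}

/-- Transfinite iterates `[η]^γ_ε(A)` of the fragment derivation. -/
def fragIter [TopologicalSpace E] (η : Set E → ℝ) (ε : ℝ) (A : Set E) (γ : Ordinal.{0}) :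
    Set E :=
  Ordinal.limitRecOn γ A (fun _ S => frag η ε S)
    (fun γ _ ih => ⋂ β : {β : Ordinal.{0} // β < γ}, ih β.1 β.2)

/-- The `ω`-iterated measure `η^ω (A) = inf {ε > 0 : [η]^ω_ε(A) = ∅}`. -/
def etaOmega [TopologicalSpace E] (η : Set E → ℝ) (A : Set E) : ℝ :=
  sInf {ε : ℝ | 0 < ε ∧ fragIter η ε A Ordinal.omega0 = ∅}

/-- The iterates `η^{ω^n}` (with `η^{ω^0} := η` and `η^{ω^{n+1}} := (η^{ω^n})^ω`). -/
def omegaPow [TopologicalSpace E] (η : Set E → ℝ) : ℕ → Set E → ℝ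
  | 0 => η
  | n + 1 => etaOmega (omegaPow η n)

/-- `η` is a measure of non compactness (with respect to the closed unit ball `ball`):
it is nonnegative, vanishes on singletons, is monotone, satisfies
`η (A ∪ B) = max (η A) (η B)`, and `η (A + l • ball) ≤ η A + l * b` for some `b > 0`.
All conditions are required on (weak*-)compact sets only. -/
structure IsMNCOn [TopologicalSpace E] [AddCommGroup E] [Module ℝ E]
    (ball : Set E) (η : Set E → ℝ) : Prop where
  nonneg : ∀ A : Set E, IsCompact A → 0 ≤ η A
  singleton : ∀ x : E, η {x} = 0
  mono : ∀ A B : Set E, IsCompact A → IsCompact B → A ⊆ B → η A ≤ η B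
  union : ∀ A B : Set E, IsCompact A → IsCompact B → η (A ∪ B) = max (η A) (η B)
  ball_add : ∃ b > 0, ∀ A : Set E, IsCompact A → ∀ l : ℝ, 0 < l →
    η (A + l • ball) ≤ η A + l * b

/-- `η` is a measure of non compactness with the explicit constant `b` in property (iii). -/
structure IsMNCWith [TopologicalSpace E] [AddCommGroup E] [Module ℝ E]
    (ball : Set E) (b : ℝ) (η : Set E → ℝ) : Prop where
  b_pos : 0 < b
  nonneg : ∀ A : Set E, IsCompact A → 0 ≤ η A
  singleton : ∀ x : E, η {x} = 0
  mono : ∀ A B : Set E, IsCompact A → IsCompact B → A ⊆ B → η A ≤ η B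
  union : ∀ A B : Set E, IsCompact A → IsCompact B → η (A ∪ B) = max (η A) (η B)
  ball_add : ∀ A : Set E, IsCompact A → ∀ l : ℝ, 0 < l →
    η (A + l • ball) ≤ η A + l * b

/-- A sublinear measure of non compactness: homogeneous and subadditive. -/
structure IsSublinear [TopologicalSpace E] [AddCommGroup E] [Module ℝ E]
    (η : Set E → ℝ) : Prop where
  homog : ∀ (l : ℝ) (A : Set E), IsCompact A → η (l • A) = |l| * η A
  subadd : ∀ A B : Set E, IsCompact A → IsCompact B → η (A + B) ≤ η A + η B

variable {X : Type*} [NormedAddCommGroup X] [NormedSpace ℝ X]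

/-- The dual norm on `X*` (the dual being equipped with its weak* topology). -/
def dnorm (f : WeakDual ℝ X) : ℝ := ‖WeakDual.toStrongDual f‖

/-- The closed unit ball of `X*`. -/
def dualBall (X : Type*) [NormedAddCommGroup X] [NormedSpace ℝ X] :
    Set (WeakDual ℝ X) := {f | dnorm f ≤ 1}

/-- The slice derivation `⟨η⟩'_ε(A)`: the points of `A` such that every weak*-closed
halfspace containing them meets `A` in a set of `η`-measure at least `ε`. -/
def sliceD (η : Set (WeakDual ℝ X) → ℝ) (ε : ℝ) (A : Set (WeakDual ℝ X)) :
    Set (WeakDual ℝ X) :=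
  {x | x ∈ A ∧ ∀ (f : X) (c : ℝ), c ≤ x f → ε ≤ η (A ∩ {y | c ≤ y f})}

/-- Transfinite iterates `⟨η⟩^γ_ε(A)` of the slice derivation. -/
def sliceIter (η : Set (WeakDual ℝ X) → ℝ) (ε : ℝ) (A : Set (WeakDual ℝ X))
    (γ : Ordinal.{0}) : Set (WeakDual ℝ X) :=
  Ordinal.limitRecOn γ A (fun _ S => sliceD η ε S)
    (fun γ _ ih => ⋂ β : {β : Ordinal.{0} // β < γ}, ih β.1 β.2)

/-- A weak*-closed halfspace of `X*`. -/
def IsHalfspace (H : Set (WeakDual ℝ X)) : Prop :=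
  ∃ (f : X) (c : ℝ), H = {y : WeakDual ℝ X | c ≤ y f}

/-- The Kuratowski measure of non compactness associated to a (dual) norm `Nd`:
the infimum of all `ε > 0` such that `A` can be covered by finitely many balls of
diameter `ε` (i.e. of radius `ε / 2`). -/
def kurN (Nd : WeakDual ℝ X → ℝ) (A : Set (WeakDual ℝ X)) : ℝ :=
  sInf {ε : ℝ | 0 < ε ∧
    ∃ F : Finset (WeakDual ℝ X), A ⊆ ⋃ c ∈ F, {y | Nd (y - c) ≤ ε / 2}}

/-- The Kuratowski measure of non compactness on `X*`. -/
def kur (A : Set (WeakDual ℝ X)) : ℝ := kurN dnorm A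

/-- The iterated sets `A^ε_β` of the convex Szlenk derivation:
`A^ε_{β+1}` is the weak*-closed convex hull of `[σ]'_ε(A^ε_β)`. -/
def convIter (ε : ℝ) (K : Set (WeakDual ℝ X)) (γ : Ordinal.{0}) : Set (WeakDual ℝ X) :=
  Ordinal.limitRecOn γ K (fun _ S => closure (convexHull ℝ (frag kur ε S)))
    (fun γ _ ih => ⋂ β : {β : Ordinal.{0} // β < γ}, ih β.1 β.2)

/-- The families `𝒯_α` of trees on `ℕ`. A tree is a set of finite sequences of
naturals (closed under initial segments); the root is the empty sequence, and
`(n)⌢s` is represented by `n :: s`. `𝒯_0 = {{∅}}`, and `T ∈ 𝒯_α` for `α ≥ 1` if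
`T = {∅} ∪ ⋃_k (n_k)⌢T_k` with `n_k` strictly increasing, `T_k ∈ 𝒯_{α_k}`, where
`α_k = β` for all `k` if `α = β + 1`, and `α_k ↗ α` if `α` is a limit ordinal. -/
inductive IsTreeFam : Ordinal.{0} → Set (List ℕ) → Prop
  | zero : IsTreeFam 0 {[]}
  | node {α : Ordinal.{0}} (nk : ℕ → ℕ) (αk : ℕ → Ordinal.{0}) (Tk : ℕ → Set (List ℕ))
      (hnk : StrictMono nk) (hTk : ∀ k, IsTreeFam (αk k) (Tk k))
      (hα : (∃ β, α = β + 1 ∧ ∀ k, αk k = β) ∨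
            (Order.IsSuccLimit α ∧ StrictMono αk ∧ α = ⨆ k, αk k)) :
      IsTreeFam α ({[]} ∪ ⋃ k, (List.cons (nk k)) '' Tk k)

/-- A family `(x_s)_{s ∈ T}` is weak*-continuous: `x_{s⌢n} → x_s` (in the ambient,
i.e. weak*, topology) along the children of every node `s` of `T`. -/
def IsContFam [TopologicalSpace E] (T : Set (List ℕ)) (x : List ℕ → E) : Prop :=
  ∀ s ∈ T, Tendsto (fun n : ℕ => x (s ++ [n]))
    (atTop ⊓ 𝓟 {n : ℕ | s ++ [n] ∈ T}) (𝓝 (x s))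

/-- A family `(x_s)_{s ∈ T}` in `X*` is `ε`-separated: `‖x_s - x_{s⌢n}‖ ≥ ε`. -/
def IsSepFam (ε : ℝ) (T : Set (List ℕ)) (x : List ℕ → WeakDual ℝ X) : Prop :=
  ∀ s ∈ T, ∀ n : ℕ, s ++ [n] ∈ T → ε ≤ dnorm (x s - x (s ++ [n]))

/-- Norm distance from a point of `X*` to a subset of `X*`. -/
def ddist (f : WeakDual ℝ X) (A : Set (WeakDual ℝ X)) : ℝ :=
  sInf ((fun g => dnorm (f - g)) '' A)

/-- The product `η₁ × η₂` of two measures of non compactness. -/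
def prodMNC {X₁ X₂ : Type*} [NormedAddCommGroup X₁] [NormedSpace ℝ X₁]
    [NormedAddCommGroup X₂] [NormedSpace ℝ X₂]
    (η₁ : Set (WeakDual ℝ X₁) → ℝ) (η₂ : Set (WeakDual ℝ X₂) → ℝ)
    (A : Set (WeakDual ℝ X₁ × WeakDual ℝ X₂)) : ℝ :=
  sInf {ε : ℝ | 0 < ε ∧ ∃ (n : ℕ) (A₁ : Fin n → Set (WeakDual ℝ X₁))
      (A₂ : Fin n → Set (WeakDual ℝ X₂)),
      (∀ i, IsCompact (A₁ i) ∧ IsCompact (A₂ i) ∧ η₁ (A₁ i) < ε ∧ η₂ (A₂ i) < ε) ∧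
      A ⊆ ⋃ i, A₁ i ×ˢ A₂ i}

/-- The dual norm on `X*` associated to an (equivalent) norm `N` on `X`. -/
def dualNormOf (N : X → ℝ) (f : WeakDual ℝ X) : ℝ :=
  sSup ((fun x => f x) '' {x : X | N x ≤ 1})

/-- The closed unit ball of the dual norm associated to a norm `N` on `X`. -/
def dualBallOf (N : X → ℝ) : Set (WeakDual ℝ X) :=
  {f : WeakDual ℝ X | ∀ x : X, |f x| ≤ N x}


/-! ### Auxiliary lemmas -/

section FragGeneric

variable {E : Type*} [TopologicalSpace E] {η : Set E → ℝ} {ε : ℝ}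

lemma frag_subset_self (η : Set E → ℝ) (ε : ℝ) (A : Set E) : frag η ε A ⊆ A :=
  fun _ hx => hx.1

lemma frag_mono' (hmono : ∀ A B : Set E, IsCompact A → IsCompact B → A ⊆ B → η A ≤ η B)
    {A B : Set E} (hA : IsCompact A) (hB : IsCompact B) (hAB : A ⊆ B) :
    frag η ε A ⊆ frag η ε B := by
  intro x hx
  refine ⟨hAB hx.1, fun U hU => (hx.2 U hU).trans (hmono _ _
    (hA.inter_right isClosed_closure) (hB.inter_right isClosed_closure)
    (Set.inter_subset_inter_left _ hAB))⟩

lemma frag_isClosed [T2Space E]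
    (hmono : ∀ A B : Set E, IsCompact A → IsCompact B → A ⊆ B → η A ≤ η B)
    {A : Set E} (hA : IsCompact A) : IsClosed (frag η ε A) := by
  have heq : frag η ε A = A ∩ {x | ∀ U ∈ 𝓝 x, ε ≤ η (A ∩ closure U)} := rfl
  rw [heq]
  refine hA.isClosed.inter ?_
  rw [← isOpen_compl_iff, isOpen_iff_mem_nhds]
  intro x hx
  simp only [Set.mem_compl_iff, Set.mem_setOf_eq, not_forall] at hx
  push_neg at hx
  obtain ⟨U, hU, hlt⟩ := hx
  refine Filter.mem_of_superset (interior_mem_nhds.2 hU) ?_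
  intro y hy
  simp only [Set.mem_compl_iff, Set.mem_setOf_eq]
  push_neg
  refine ⟨interior U, isOpen_interior.mem_nhds hy, lt_of_le_of_lt ?_ hlt⟩
  exact hmono _ _ (hA.inter_right isClosed_closure) (hA.inter_right isClosed_closure)
    (Set.inter_subset_inter_right _ (closure_mono interior_subset))

lemma frag_union_subset [T2Space E] [RegularSpace E]
    (hmono : ∀ A B : Set E, IsCompact A → IsCompact B → A ⊆ B → η A ≤ η B)
    (hunion : ∀ A B : Set E, IsCompact A → IsCompact B → η (A ∪ B) = max (η A) (η B))
    (hempty : η ∅ < ε) {B₁ B₂ : Set E} (h1 : IsCompact B₁) (h2 : IsCompact B₂) :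
    frag η ε (B₁ ∪ B₂) ⊆ frag η ε B₁ ∪ frag η ε B₂ := by
  intro x hx
  by_contra hc
  rw [Set.mem_union] at hc
  push_neg at hc
  obtain ⟨hc1, hc2⟩ := hc
  have key : ∀ B : Set E, IsCompact B → x ∉ frag η ε B →
      ∃ V ∈ 𝓝 x, η (B ∩ closure V) < ε := by
    intro B hB hxB
    by_cases hxB' : x ∈ B
    · simp only [frag, Set.mem_setOf_eq, not_and] at hxB
      have h := hxB hxB'
      push_neg at h
      exact h
    · obtain ⟨t, ht, htc, hts⟩ := exists_mem_nhds_isClosed_subset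
        (hB.isClosed.isOpen_compl.mem_nhds hxB')
      refine ⟨t, ht, ?_⟩
      rw [htc.closure_eq]
      have hBt : B ∩ t = ∅ := by
        rw [Set.eq_empty_iff_forall_notMem]
        rintro y ⟨hy1, hy2⟩
        exact hts hy2 hy1
      rw [hBt]
      exact hempty
  obtain ⟨V₁, hV₁, hη₁⟩ := key B₁ h1 hc1
  obtain ⟨V₂, hV₂, hη₂⟩ := key B₂ h2 hc2
  have hle := hx.2 (V₁ ∩ V₂) (Filter.inter_mem hV₁ hV₂)
  have hsub : (B₁ ∪ B₂) ∩ closure (V₁ ∩ V₂) ⊆ (B₁ ∩ closure V₁) ∪ (B₂ ∩ closure V₂) := by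
    rintro y ⟨hy1, hy2⟩
    have h1' : y ∈ closure V₁ := closure_mono Set.inter_subset_left hy2
    have h2' : y ∈ closure V₂ := closure_mono Set.inter_subset_right hy2
    rcases hy1 with h | h
    · exact Or.inl ⟨h, h1'⟩
    · exact Or.inr ⟨h, h2'⟩
  have hK1 : IsCompact (B₁ ∩ closure V₁) := h1.inter_right isClosed_closure
  have hK2 : IsCompact (B₂ ∩ closure V₂) := h2.inter_right isClosed_closure
  have hη := hmono _ _ ((h1.union h2).inter_right isClosed_closure) (hK1.union hK2) hsub
  rw [hunion _ _ hK1 hK2] at hη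
  have := hle.trans hη
  rcases le_max_iff.1 this with h | h <;> linarith

lemma frag_biUnion_subset [T2Space E] [RegularSpace E]
    (hmono : ∀ A B : Set E, IsCompact A → IsCompact B → A ⊆ B → η A ≤ η B)
    (hunion : ∀ A B : Set E, IsCompact A → IsCompact B → η (A ∪ B) = max (η A) (η B))
    (hempty : η ∅ < ε) {ι : Type*} (s : Finset ι) (f : ι → Set E)
    (hf : ∀ i ∈ s, IsCompact (f i)) :
    frag η ε (⋃ i ∈ s, f i) ⊆ ⋃ i ∈ s, frag η ε (f i) := by
  classical
  induction s using Finset.induction with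
  | empty => simpa using frag_subset_self η ε ∅
  | @insert a s ha ih =>
    rw [Finset.set_biUnion_insert]
    have hfs : IsCompact (⋃ i ∈ s, f i) :=
      s.isCompact_biUnion fun i hi => hf i (Finset.mem_insert_of_mem hi)
    refine (frag_union_subset hmono hunion hempty (hf a (Finset.mem_insert_self a s)) hfs).trans ?_
    rw [Finset.set_biUnion_insert]
    exact Set.union_subset_union (subset_refl _)
      (ih fun i hi => hf i (Finset.mem_insert_of_mem hi))

lemma fragIter_zero (η : Set E → ℝ) (ε : ℝ) (A : Set E) : fragIter η ε A 0 = A :=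
  Ordinal.limitRecOn_zero _ _ _

lemma fragIter_succ (η : Set E → ℝ) (ε : ℝ) (A : Set E) (γ : Ordinal) :
    fragIter η ε A (γ + 1) = frag η ε (fragIter η ε A γ) := by
  unfold fragIter
  rw [Ordinal.add_one_eq_succ, Ordinal.limitRecOn_succ]

lemma fragIter_natCast_succ (η : Set E → ℝ) (ε : ℝ) (A : Set E) (n : ℕ) :
    fragIter η ε A (↑(n + 1) : ℕ) = frag η ε (fragIter η ε A n) := by
  have : ((n + 1 : ℕ) : Ordinal) = (n : Ordinal) + 1 := by push_cast; ring
  rw [this, fragIter_succ]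

lemma fragIter_omega0_eq (η : Set E → ℝ) (ε : ℝ) (A : Set E) :
    fragIter η ε A Ordinal.omega0 = ⋂ n : ℕ, fragIter η ε A n := by
  unfold fragIter
  rw [Ordinal.limitRecOn_limit _ _ _ _ Ordinal.isSuccLimit_omega0]
  apply subset_antisymm
  · intro x hx
    refine Set.mem_iInter.2 fun n => ?_
    exact Set.mem_iInter.1 hx ⟨(n : Ordinal), Ordinal.nat_lt_omega0 n⟩
  · intro x hx
    refine Set.mem_iInter.2 ?_
    rintro ⟨β, hβ⟩
    obtain ⟨n, rfl⟩ := Ordinal.lt_omega0.1 hβ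
    exact Set.mem_iInter.1 hx n

lemma fragIter_nat_isCompact [T2Space E]
    (hmono : ∀ A B : Set E, IsCompact A → IsCompact B → A ⊆ B → η A ≤ η B)
    {A : Set E} (hA : IsCompact A) : ∀ n : ℕ, IsCompact (fragIter η ε A n)
  | 0 => by rw [Nat.cast_zero, fragIter_zero]; exact hA
  | n + 1 => by
    rw [fragIter_natCast_succ]
    exact (fragIter_nat_isCompact hmono hA n).of_isClosed_subset
      (frag_isClosed hmono (fragIter_nat_isCompact hmono hA n))
      (frag_subset_self _ _ _)

lemma fragIter_nat_antitone (η : Set E → ℝ) (ε : ℝ) (A : Set E) :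
    Antitone fun n : ℕ => fragIter η ε A n := by
  apply antitone_nat_of_succ_le
  intro n
  rw [fragIter_natCast_succ]
  exact frag_subset_self _ _ _

lemma exists_fragIter_nat_empty [T2Space E]
    (hmono : ∀ A B : Set E, IsCompact A → IsCompact B → A ⊆ B → η A ≤ η B)
    {A : Set E} (hA : IsCompact A) (h : fragIter η ε A Ordinal.omega0 = ∅) :
    ∃ n : ℕ, fragIter η ε A (n : ℕ) = ∅ := by
  by_contra hc
  push_neg at hc
  have hne : ∀ n : ℕ, (fragIter η ε A n).Nonempty := hc
  have hcl : ∀ n : ℕ, IsClosed (fragIter η ε A (n : ℕ)) := by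
    intro n
    cases n with
    | zero => rw [Nat.cast_zero, fragIter_zero]; exact hA.isClosed
    | succ n =>
      rw [fragIter_natCast_succ]
      exact frag_isClosed hmono (fragIter_nat_isCompact hmono hA n)
  have hnonempty := IsCompact.nonempty_iInter_of_sequence_nonempty_isCompact_isClosed
    (fun n : ℕ => fragIter η ε A n)
    (fun n => fragIter_nat_antitone η ε A (Nat.le_succ n)) hne
    (fragIter_nat_isCompact hmono hA 0) hcl
  rw [← fragIter_omega0_eq, h] at hnonempty
  exact Set.not_nonempty_empty hnonempty

end FragGeneric

section ProdMNC

variable {X₁ X₂ : Type*} [NormedAddCommGroup X₁] [NormedSpace ℝ X₁]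
  [NormedAddCommGroup X₂] [NormedSpace ℝ X₂]
  {η₁ : Set (WeakDual ℝ X₁) → ℝ} {η₂ : Set (WeakDual ℝ X₂) → ℝ}

/-- The defining set for `prodMNC`. -/
def prodSet (η₁ : Set (WeakDual ℝ X₁) → ℝ) (η₂ : Set (WeakDual ℝ X₂) → ℝ)
    (A : Set (WeakDual ℝ X₁ × WeakDual ℝ X₂)) : Set ℝ :=
  {ε : ℝ | 0 < ε ∧ ∃ (n : ℕ) (A₁ : Fin n → Set (WeakDual ℝ X₁))
      (A₂ : Fin n → Set (WeakDual ℝ X₂)),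
      (∀ i, IsCompact (A₁ i) ∧ IsCompact (A₂ i) ∧ η₁ (A₁ i) < ε ∧ η₂ (A₂ i) < ε) ∧
      A ⊆ ⋃ i, A₁ i ×ˢ A₂ i}

lemma prodMNC_eq_sInf (A : Set (WeakDual ℝ X₁ × WeakDual ℝ X₂)) :
    prodMNC η₁ η₂ A = sInf (prodSet η₁ η₂ A) := rfl

lemma prodSet_bddBelow (A : Set (WeakDual ℝ X₁ × WeakDual ℝ X₂)) :
    BddBelow (prodSet η₁ η₂ A) :=
  ⟨0, fun _ hx => hx.1.le⟩

lemma prodSet_anti {A B : Set (WeakDual ℝ X₁ × WeakDual ℝ X₂)} (hAB : A ⊆ B) :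
    prodSet η₁ η₂ B ⊆ prodSet η₁ η₂ A := by
  rintro ε ⟨hε, n, A₁, A₂, hprop, hcov⟩
  exact ⟨hε, n, A₁, A₂, hprop, hAB.trans hcov⟩

lemma prodSet_upward {A : Set (WeakDual ℝ X₁ × WeakDual ℝ X₂)} {ε ε' : ℝ}
    (h : ε ∈ prodSet η₁ η₂ A) (hεε' : ε ≤ ε') : ε' ∈ prodSet η₁ η₂ A := by
  obtain ⟨hε, n, A₁, A₂, hprop, hcov⟩ := h
  exact ⟨lt_of_lt_of_le hε hεε', n, A₁, A₂, fun i =>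
    ⟨(hprop i).1, (hprop i).2.1, lt_of_lt_of_le (hprop i).2.2.1 hεε',
      lt_of_lt_of_le (hprop i).2.2.2 hεε'⟩, hcov⟩

lemma prodSet_nonempty
    (h₁ : ∀ A : Set (WeakDual ℝ X₁), IsCompact A → 0 ≤ η₁ A)
    (h₂ : ∀ A : Set (WeakDual ℝ X₂), IsCompact A → 0 ≤ η₂ A)
    {A : Set (WeakDual ℝ X₁ × WeakDual ℝ X₂)} (hA : IsCompact A) :
    (prodSet η₁ η₂ A).Nonempty := by
  set K₁ := Prod.fst '' A with hK₁
  set K₂ := Prod.snd '' A with hK₂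
  have hK₁c : IsCompact K₁ := hA.image continuous_fst
  have hK₂c : IsCompact K₂ := hA.image continuous_snd
  refine ⟨max (η₁ K₁) (η₂ K₂) + 1, ?_, 1, fun _ => K₁, fun _ => K₂, ?_, ?_⟩
  · have := (h₁ K₁ hK₁c).trans (le_max_left (η₁ K₁) (η₂ K₂))
    linarith
  · intro i
    refine ⟨hK₁c, hK₂c, ?_, ?_⟩
    · have := le_max_left (η₁ K₁) (η₂ K₂); linarith
    · have := le_max_right (η₁ K₁) (η₂ K₂); linarith
  · intro x hx
    exact Set.mem_iUnion.2 ⟨0, ⟨Set.mem_image_of_mem _ hx, Set.mem_image_of_mem _ hx⟩⟩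

lemma prodMNC_le_of_mem {A : Set (WeakDual ℝ X₁ × WeakDual ℝ X₂)} {ε : ℝ}
    (h : ε ∈ prodSet η₁ η₂ A) : prodMNC η₁ η₂ A ≤ ε :=
  csInf_le (prodSet_bddBelow A) h

lemma mem_prodSet_of_lt {A : Set (WeakDual ℝ X₁ × WeakDual ℝ X₂)} {ε : ℝ}
    (hne : (prodSet η₁ η₂ A).Nonempty) (h : prodMNC η₁ η₂ A < ε) :
    ε ∈ prodSet η₁ η₂ A := by
  obtain ⟨δ, hδ, hδε⟩ := exists_lt_of_csInf_lt hne h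
  exact prodSet_upward hδ hδε.le

lemma prodMNC_nonneg (A : Set (WeakDual ℝ X₁ × WeakDual ℝ X₂)) :
    0 ≤ prodMNC η₁ η₂ A :=
  Real.sInf_nonneg fun _ hx => hx.1.le

lemma prodMNC_mono
    (h₁ : ∀ A : Set (WeakDual ℝ X₁), IsCompact A → 0 ≤ η₁ A)
    (h₂ : ∀ A : Set (WeakDual ℝ X₂), IsCompact A → 0 ≤ η₂ A)
    {A B : Set (WeakDual ℝ X₁ × WeakDual ℝ X₂)} (hB : IsCompact B) (hAB : A ⊆ B) :
    prodMNC η₁ η₂ A ≤ prodMNC η₁ η₂ B :=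
  csInf_le_csInf (prodSet_bddBelow A) (prodSet_nonempty h₁ h₂ hB) (prodSet_anti hAB)

lemma prodSet_union_mem {A B : Set (WeakDual ℝ X₁ × WeakDual ℝ X₂)} {ε : ℝ}
    (hA : ε ∈ prodSet η₁ η₂ A) (hB : ε ∈ prodSet η₁ η₂ B) :
    ε ∈ prodSet η₁ η₂ (A ∪ B) := by
  obtain ⟨hε, n, A₁, A₂, hpropA, hcovA⟩ := hA
  obtain ⟨-, m, B₁, B₂, hpropB, hcovB⟩ := hB
  refine ⟨hε, n + m, Fin.addCases A₁ B₁, Fin.addCases A₂ B₂, ?_, ?_⟩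
  · intro i
    refine Fin.addCases (fun i => ?_) (fun i => ?_) i
    · simp only [Fin.addCases_left]; exact hpropA i
    · simp only [Fin.addCases_right]; exact hpropB i
  · rintro x (hx | hx)
    · obtain ⟨i, hi⟩ := Set.mem_iUnion.1 (hcovA hx)
      refine Set.mem_iUnion.2 ⟨Fin.castAdd m i, ?_⟩
      simpa only [Fin.addCases_left] using hi
    · obtain ⟨i, hi⟩ := Set.mem_iUnion.1 (hcovB hx)
      refine Set.mem_iUnion.2 ⟨Fin.natAdd n i, ?_⟩
      simpa only [Fin.addCases_right] using hi

end ProdMNC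


/-- The product `η₁ × η₂` of two measures of non compactness is a measure of non
compactness on `X₁* × X₂*` (endowed with the supremum norm, whose unit ball is
`dualBall X₁ ×ˢ dualBall X₂`), and moreover:
(1) `[η₁ × η₂]'_ε(A¹ × A²) ⊆ ([η₁]'_ε(A¹) × A²) ∪ (A¹ × [η₂]'_ε(A²))`;
(2) if `[η₁]^ω_ε(A¹) = ∅` and `[η₂]^ω_ε(A²) = ∅` then `[η₁ × η₂]^ω_ε(A¹ × A²) = ∅`. -/
theorem prodMNC_isMNC
    {X₁ X₂ : Type*} [NormedAddCommGroup X₁] [NormedSpace ℝ X₁] [CompleteSpace X₁]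
    [NormedAddCommGroup X₂] [NormedSpace ℝ X₂] [CompleteSpace X₂]
    (η₁ : Set (WeakDual ℝ X₁) → ℝ) (η₂ : Set (WeakDual ℝ X₂) → ℝ)
    (h₁ : IsMNCOn (dualBall X₁) η₁) (h₂ : IsMNCOn (dualBall X₂) η₂) :
    IsMNCOn (dualBall X₁ ×ˢ dualBall X₂) (prodMNC η₁ η₂) ∧
    (∀ (A₁ : Set (WeakDual ℝ X₁)) (A₂ : Set (WeakDual ℝ X₂)),
      IsCompact A₁ → IsCompact A₂ → ∀ ε : ℝ, 0 < ε →
      frag (prodMNC η₁ η₂) ε (A₁ ×ˢ A₂) ⊆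
        (frag η₁ ε A₁ ×ˢ A₂) ∪ (A₁ ×ˢ frag η₂ ε A₂)) ∧
    (∀ (A₁ : Set (WeakDual ℝ X₁)) (A₂ : Set (WeakDual ℝ X₂)),
      IsCompact A₁ → IsCompact A₂ → ∀ ε : ℝ, 0 < ε →
      fragIter η₁ ε A₁ Ordinal.omega0 = ∅ → fragIter η₂ ε A₂ Ordinal.omega0 = ∅ →
      fragIter (prodMNC η₁ η₂) ε (A₁ ×ˢ A₂) Ordinal.omega0 = ∅) := by
  classical
  obtain ⟨b₁, hb₁, hball₁⟩ := h₁.ball_add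
  obtain ⟨b₂, hb₂, hball₂⟩ := h₂.ball_add
  have hB₁c : IsCompact (dualBall X₁) := by
    have h := WeakDual.isCompact_closedBall (𝕜 := ℝ) (E := X₁) 0 1
    convert h using 1
    ext f
    simp [dualBall, dnorm, Metric.mem_closedBall, dist_zero_right]
  have hB₂c : IsCompact (dualBall X₂) := by
    have h := WeakDual.isCompact_closedBall (𝕜 := ℝ) (E := X₂) 0 1
    convert h using 1
    ext f
    simp [dualBall, dnorm, Metric.mem_closedBall, dist_zero_right]
  have hsingleton : ∀ x : WeakDual ℝ X₁ × WeakDual ℝ X₂, prodMNC η₁ η₂ {x} = 0 := by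
    intro x
    rw [prodMNC_eq_sInf]
    have hS : prodSet η₁ η₂ {x} = Set.Ioi 0 := by
      apply subset_antisymm
      · exact fun ε hε => hε.1
      · intro ε hε
        refine ⟨hε, 1, fun _ => {x.1}, fun _ => {x.2}, ?_, ?_⟩
        · intro i
          refine ⟨isCompact_singleton, isCompact_singleton, ?_, ?_⟩
          · rw [h₁.singleton]; exact hε
          · rw [h₂.singleton]; exact hε
        · intro y hy
          rw [Set.mem_singleton_iff] at hy; subst hy
          exact Set.mem_iUnion.2 ⟨0, rfl, rfl⟩
    rw [hS, csInf_Ioi]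
  have hPmono : ∀ A B : Set (WeakDual ℝ X₁ × WeakDual ℝ X₂), IsCompact A → IsCompact B →
      A ⊆ B → prodMNC η₁ η₂ A ≤ prodMNC η₁ η₂ B :=
    fun _ B _ hB hAB => prodMNC_mono h₁.nonneg h₂.nonneg hB hAB
  have hPunion : ∀ A B : Set (WeakDual ℝ X₁ × WeakDual ℝ X₂), IsCompact A → IsCompact B →
      prodMNC η₁ η₂ (A ∪ B) = max (prodMNC η₁ η₂ A) (prodMNC η₁ η₂ B) := by
    intro A B hA hB
    apply le_antisymm
    · apply le_of_forall_pos_le_add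
      intro δ hδ
      have hmA : max (prodMNC η₁ η₂ A) (prodMNC η₁ η₂ B) + δ ∈ prodSet η₁ η₂ A := by
        refine mem_prodSet_of_lt (prodSet_nonempty h₁.nonneg h₂.nonneg hA) ?_
        have := le_max_left (prodMNC η₁ η₂ A) (prodMNC η₁ η₂ B)
        linarith
      have hmB : max (prodMNC η₁ η₂ A) (prodMNC η₁ η₂ B) + δ ∈ prodSet η₁ η₂ B := by
        refine mem_prodSet_of_lt (prodSet_nonempty h₁.nonneg h₂.nonneg hB) ?_
        have := le_max_right (prodMNC η₁ η₂ A) (prodMNC η₁ η₂ B)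
        linarith
      exact prodMNC_le_of_mem (prodSet_union_mem hmA hmB)
    · exact max_le
        (prodMNC_mono h₁.nonneg h₂.nonneg (hA.union hB) Set.subset_union_left)
        (prodMNC_mono h₁.nonneg h₂.nonneg (hA.union hB) Set.subset_union_right)
  have hballadd : ∀ A : Set (WeakDual ℝ X₁ × WeakDual ℝ X₂), IsCompact A → ∀ l : ℝ, 0 < l →
      prodMNC η₁ η₂ (A + l • (dualBall X₁ ×ˢ dualBall X₂)) ≤
        prodMNC η₁ η₂ A + l * max b₁ b₂ := by
    intro A hA l hl
    have hbpos : 0 < max b₁ b₂ := lt_max_of_lt_left hb₁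
    have key : ∀ ε ∈ prodSet η₁ η₂ A,
        prodMNC η₁ η₂ (A + l • (dualBall X₁ ×ˢ dualBall X₂)) ≤ ε + l * max b₁ b₂ := by
      rintro ε ⟨hε, n, A₁, A₂, hprop, hcov⟩
      apply prodMNC_le_of_mem
      refine ⟨by positivity, n, fun i => A₁ i + l • dualBall X₁,
        fun i => A₂ i + l • dualBall X₂, ?_, ?_⟩
      · intro i
        have hc1 : IsCompact (A₁ i + l • dualBall X₁) := (hprop i).1.add (hB₁c.smul l)
        have hc2 : IsCompact (A₂ i + l • dualBall X₂) := (hprop i).2.1.add (hB₂c.smul l)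
        refine ⟨hc1, hc2, ?_, ?_⟩
        · have h1 := hball₁ (A₁ i) (hprop i).1 l hl
          have h2 := (hprop i).2.2.1
          have h3 : l * b₁ ≤ l * max b₁ b₂ :=
            mul_le_mul_of_nonneg_left (le_max_left _ _) hl.le
          linarith
        · have h1 := hball₂ (A₂ i) (hprop i).2.1 l hl
          have h2 := (hprop i).2.2.2
          have h3 : l * b₂ ≤ l * max b₁ b₂ :=
            mul_le_mul_of_nonneg_left (le_max_right _ _) hl.le
          linarith
      · rintro z hz
        rw [Set.mem_add] at hz
        obtain ⟨a, ha, v, hv, rfl⟩ := hz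
        obtain ⟨i, hi⟩ := Set.mem_iUnion.1 (hcov ha)
        obtain ⟨w, hw, rfl⟩ := hv
        refine Set.mem_iUnion.2 ⟨i, ?_, ?_⟩
        · show (a + l • w).1 ∈ A₁ i + l • dualBall X₁
          rw [Prod.fst_add, Prod.smul_fst]
          exact Set.add_mem_add hi.1 (Set.smul_mem_smul_set hw.1)
        · show (a + l • w).2 ∈ A₂ i + l • dualBall X₂
          rw [Prod.snd_add, Prod.smul_snd]
          exact Set.add_mem_add hi.2 (Set.smul_mem_smul_set hw.2)
    have h4 : prodMNC η₁ η₂ (A + l • (dualBall X₁ ×ˢ dualBall X₂)) - l * max b₁ b₂ ≤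
        prodMNC η₁ η₂ A := by
      rw [prodMNC_eq_sInf A]
      refine le_csInf (prodSet_nonempty h₁.nonneg h₂.nonneg hA) fun ε hε => ?_
      linarith [key ε hε]
    linarith
  have hMNC : IsMNCOn (dualBall X₁ ×ˢ dualBall X₂) (prodMNC η₁ η₂) :=
    ⟨fun A _ => prodMNC_nonneg A, hsingleton,
      fun _ B _ hB hAB => prodMNC_mono h₁.nonneg h₂.nonneg hB hAB, hPunion,
      ⟨max b₁ b₂, lt_max_of_lt_left hb₁, hballadd⟩⟩
  have hfrag : ∀ (A₁ : Set (WeakDual ℝ X₁)) (A₂ : Set (WeakDual ℝ X₂)),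
      IsCompact A₁ → IsCompact A₂ → ∀ ε : ℝ, 0 < ε →
      frag (prodMNC η₁ η₂) ε (A₁ ×ˢ A₂) ⊆
        (frag η₁ ε A₁ ×ˢ A₂) ∪ (A₁ ×ˢ frag η₂ ε A₂) := by
    intro A₁ A₂ hA₁ hA₂ ε hε x hx
    have hx1 : x.1 ∈ A₁ := hx.1.1
    have hx2 : x.2 ∈ A₂ := hx.1.2
    by_cases h : x.1 ∈ frag η₁ ε A₁
    · exact Or.inl ⟨h, hx2⟩
    by_cases h' : x.2 ∈ frag η₂ ε A₂
    · exact Or.inr ⟨hx1, h'⟩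
    exfalso
    have hU₁ : ∃ U ∈ 𝓝 x.1, η₁ (A₁ ∩ closure U) < ε := by
      simp only [frag, Set.mem_setOf_eq, not_and] at h
      have h2 := h hx1; push_neg at h2; exact h2
    have hU₂ : ∃ U ∈ 𝓝 x.2, η₂ (A₂ ∩ closure U) < ε := by
      simp only [frag, Set.mem_setOf_eq, not_and] at h'
      have h2 := h' hx2; push_neg at h2; exact h2
    obtain ⟨U₁, hU₁n, hU₁η⟩ := hU₁
    obtain ⟨U₂, hU₂n, hU₂η⟩ := hU₂
    have hK₁c : IsCompact (A₁ ∩ closure U₁) := hA₁.inter_right isClosed_closure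
    have hK₂c : IsCompact (A₂ ∩ closure U₂) := hA₂.inter_right isClosed_closure
    have hUn : U₁ ×ˢ U₂ ∈ 𝓝 (x.1, x.2) := by
      rw [nhds_prod_eq]
      exact Filter.prod_mem_prod hU₁n hU₂n
    have hle := hx.2 (U₁ ×ˢ U₂) hUn
    have hm0 : 0 ≤ max (η₁ (A₁ ∩ closure U₁)) (η₂ (A₂ ∩ closure U₂)) :=
      le_trans (h₁.nonneg _ hK₁c) (le_max_left _ _)
    have hmε : max (η₁ (A₁ ∩ closure U₁)) (η₂ (A₂ ∩ closure U₂)) < ε := max_lt hU₁η hU₂η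
    have hmem : (max (η₁ (A₁ ∩ closure U₁)) (η₂ (A₂ ∩ closure U₂)) + ε) / 2 ∈
        prodSet η₁ η₂ ((A₁ ×ˢ A₂) ∩ closure (U₁ ×ˢ U₂)) := by
      refine ⟨by linarith, 1, fun _ => A₁ ∩ closure U₁, fun _ => A₂ ∩ closure U₂, ?_, ?_⟩
      · intro i
        refine ⟨hK₁c, hK₂c, ?_, ?_⟩
        · have := le_max_left (η₁ (A₁ ∩ closure U₁)) (η₂ (A₂ ∩ closure U₂)); linarith
        · have := le_max_right (η₁ (A₁ ∩ closure U₁)) (η₂ (A₂ ∩ closure U₂)); linarith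
      · rw [closure_prod_eq]
        rintro y ⟨⟨ha1, ha2⟩, hc1, hc2⟩
        exact Set.mem_iUnion.2 ⟨0, ⟨ha1, hc1⟩, ⟨ha2, hc2⟩⟩
    have hle2 := prodMNC_le_of_mem hmem
    linarith
  refine ⟨hMNC, hfrag, ?_⟩
  intro A₁ A₂ hA₁ hA₂ ε hε h1ω h2ω
  obtain ⟨N, hN⟩ := exists_fragIter_nat_empty h₁.mono hA₁ h1ω
  obtain ⟨M, hM⟩ := exists_fragIter_nat_empty h₂.mono hA₂ h2ω
  have hempty : prodMNC η₁ η₂ (∅ : Set (WeakDual ℝ X₁ × WeakDual ℝ X₂)) < ε := by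
    have h0 : prodMNC η₁ η₂ (∅ : Set (WeakDual ℝ X₁ × WeakDual ℝ X₂)) ≤
        prodMNC η₁ η₂ {(0, 0)} :=
      prodMNC_mono h₁.nonneg h₂.nonneg isCompact_singleton (Set.empty_subset _)
    rw [hsingleton] at h0
    linarith
  have hCc : ∀ n : ℕ, IsCompact (fragIter η₁ ε A₁ (n : ℕ)) :=
    fragIter_nat_isCompact h₁.mono hA₁
  have hDc : ∀ n : ℕ, IsCompact (fragIter η₂ ε A₂ (n : ℕ)) :=
    fragIter_nat_isCompact h₂.mono hA₂
  have hPc : ∀ n : ℕ, IsCompact (fragIter (prodMNC η₁ η₂) ε (A₁ ×ˢ A₂) (n : ℕ)) :=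
    fragIter_nat_isCompact hPmono (hA₁.prod hA₂)
  have key : ∀ n : ℕ, fragIter (prodMNC η₁ η₂) ε (A₁ ×ˢ A₂) (n : ℕ) ⊆
      ⋃ i ∈ Finset.range (n + 1),
        fragIter η₁ ε A₁ (i : ℕ) ×ˢ fragIter η₂ ε A₂ ((n - i : ℕ)) := by
    intro n
    induction n with
    | zero =>
      intro x hx
      rw [Nat.cast_zero, fragIter_zero] at hx
      refine Set.mem_biUnion (Finset.self_mem_range_succ 0) ?_
      simpa [Nat.cast_zero, fragIter_zero] using hx
    | succ n ih =>
      rw [fragIter_natCast_succ]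
      have hQc : ∀ i ∈ Finset.range (n + 1),
          IsCompact (fragIter η₁ ε A₁ (i : ℕ) ×ˢ fragIter η₂ ε A₂ ((n - i : ℕ))) :=
        fun i _ => (hCc i).prod (hDc (n - i))
      have hQcompact : IsCompact (⋃ i ∈ Finset.range (n + 1),
          fragIter η₁ ε A₁ (i : ℕ) ×ˢ fragIter η₂ ε A₂ ((n - i : ℕ))) :=
        (Finset.range (n + 1)).isCompact_biUnion hQc
      refine (frag_mono' hPmono (hPc n) hQcompact ih).trans ?_
      refine (frag_biUnion_subset hPmono hPunion hempty _ _ hQc).trans ?_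
      intro x hx
      obtain ⟨i, hi, hxi⟩ := Set.mem_iUnion₂.1 hx
      rw [Finset.mem_range] at hi
      have hx2 := hfrag _ _ (hCc i) (hDc (n - i)) ε hε hxi
      rcases hx2 with h | h
      · refine Set.mem_biUnion (Finset.mem_range.2 (by omega : i + 1 < n + 2)) ?_
        have e1 : (n + 1 - (i + 1) : ℕ) = (n - i : ℕ) := by omega
        rw [e1, fragIter_natCast_succ]
        exact h
      · refine Set.mem_biUnion (Finset.mem_range.2 (by omega : i < n + 2)) ?_
        have e1 : (n + 1 - i : ℕ) = (n - i : ℕ) + 1 := by omega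
        rw [e1, fragIter_natCast_succ]
        exact h
  have hfinal : fragIter (prodMNC η₁ η₂) ε (A₁ ×ˢ A₂) ((N + M : ℕ)) = ∅ := by
    rw [Set.eq_empty_iff_forall_notMem]
    intro x hx
    obtain ⟨i, hi, hxi⟩ := Set.mem_iUnion₂.1 (key (N + M) hx)
    rw [Finset.mem_range] at hi
    rcases le_or_gt N i with h | h
    · have hsub : fragIter η₁ ε A₁ (i : ℕ) ⊆ fragIter η₁ ε A₁ (N : ℕ) :=
        fragIter_nat_antitone η₁ ε A₁ h
      have := hsub hxi.1
      rw [hN] at this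
      exact this
    · have hj : M ≤ N + M - i := by omega
      have hsub : fragIter η₂ ε A₂ ((N + M - i : ℕ)) ⊆ fragIter η₂ ε A₂ (M : ℕ) :=
        fragIter_nat_antitone η₂ ε A₂ hj
      have := hsub hxi.2
      rw [hM] at this
      exact this
  rw [fragIter_omega0_eq, Set.eq_empty_iff_forall_notMem]
  intro x hx
  have := Set.mem_iInter.1 hx (N + M)
  rw [hfinal] at this
  exact this


end Szlenk
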